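/- In the setting of the CD effective-server-time recursions (K ≥ 2, ρ > 0, μ_t > 0, λ̃ = ρ·μ_i, with m_i, n_i, α_i, γ_i defined as in the first-moment recursion), define further for each μ_i > 0: E_0 = (1 + m_1·λ̃)/(λ̃ + μ_t − n_1·λ̃) and E_l = m_l + n_l·E_{l−1} for 1 ≤ l ≤ K−1 (with n_K := 1, E_K = m_K + E_{K−1}); δ_K = γ_K; σ_K = (2δ_K/α_K)·E_{K−1} + (2λ̃/α_K)·E_K; r_K = 2/(δ_K·α_K) + σ_K/δ_K; and for i = 1, ..., K−1 (decreasing index): δ_{K−i} = (α_{K−i}·δ_{K−i+1} − λ̃·(K−i+1)·μ_i)/δ_{K−i+1}, σ_{K−i} = (2λ̃/α_{K−i})·E_{K−i+1} + (2(K−i)·μ_i/α_{K−i})·E_{K−i−1}, r_{K−i} = (1/δ_{K−i})·(2/α_{K−i} + λ̃·r_{K−i+1} + σ_{K−i}); finally δ_0 = (α_0·δ_1 − λ̃·μ_i)/δ_1 and M_2 = (1/δ_0)·(2/α_0 + λ̃·r_1 + 2λ̃·E_1/α_0). Then, as μ_i → ∞ (with ρ fixed), the second moment M_2 = E[(Υ̌_0)²]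 converges to 2·ǎ_0²/(η²·μ_t²), where ǎ_0 = Σ_{j=0}^{K} ρ^j/j! and η = Σ_{j=0}^{K−1} (ρ^j/j!)·(K−j)/K. -/

import Mathlib

open Filter

/-- `α_i = λ̃ + i·μᵢ + (K−i)·μ_t/K` with `λ̃ = ρ·μᵢ`. -/
noncomputable def alphaCD (K : ℕ) (ρ μt μi : ℝ) (i : ℕ) : ℝ :=
  ρ * μi + (i : ℝ) * μi + ((K : ℝ) - (i : ℝ)) * μt / K

/-- `γ_i = i·μᵢ + (K−i)·μ_t/K`. -/
noncomputable def gammaCD (K : ℕ) (μt μi : ℝ) (i : ℕ) : ℝ :=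
  (i : ℝ) * μi + ((K : ℝ) - (i : ℝ)) * μt / K


open Finset

noncomputable def Aseq (K : ℕ) (ρ : ℝ) : ℕ → ℝ
  | 0 => 1 / (K : ℝ)
  | (i+1) => (1 + ρ * Aseq K ρ i) / ((K : ℝ) - ((i : ℝ) + 1))

noncomputable def eseq (K : ℕ) (ρ μt : ℝ) : ℕ → ℝ
  | 0 => 0
  | (i+1) => ((i : ℝ) + 1) * μt / K + ρ * eseq K ρ μt i / ((K : ℝ) - (i : ℝ))

lemma Aseq_closed (K : ℕ) (ρ : ℝ) :
    ∀ i d : ℕ, d + 1 + i = K →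
      Aseq K ρ i = (d.factorial : ℝ) * ∑ u ∈ range (i + 1), ρ ^ u / ((d + 1 + u).factorial : ℝ) := by
  intro i
  induction i with
  | zero =>
    intro d hd
    have : (K : ℝ) = (d : ℝ) + 1 := by subst hd; push_cast; ring
    simp only [Aseq, zero_add, range_one, sum_singleton, pow_zero, this, Nat.add_zero,
      Nat.factorial_succ]
    have h1 : (d.factorial : ℝ) ≠ 0 := by positivity
    push_cast
    field_simp
  | succ i ih =>
    intro d hd
    have hd' : (d + 1) + 1 + i = K := by omega
    have hA := ih (d + 1) hd'
    show (1 + ρ * Aseq K ρ i) / ((K : ℝ) - ((i : ℝ) + 1)) = _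
    rw [hA]
    have hKr : (K : ℝ) - ((i : ℝ) + 1) = (d : ℝ) + 1 := by
      have hK2 : K = d + 2 + i := by omega
      subst hK2; push_cast; ring
    rw [hKr]
    have hdpos : (0 : ℝ) < (d : ℝ) + 1 := by positivity
    rw [div_eq_iff (ne_of_gt hdpos)]
    have hL : 1 + ρ * ((((d+1).factorial : ℕ) : ℝ) *
          ∑ u ∈ range (i + 1), ρ ^ u / (((d + 1 + 1 + u).factorial : ℕ) : ℝ))
        = 1 + ∑ u ∈ range (i + 1),
            (((d+1).factorial : ℕ) : ℝ) * ρ ^ (u+1) / (((d + 1 + 1 + u).factorial : ℕ) : ℝ) := by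
      rw [mul_sum, mul_sum]
      congr 1
      refine sum_congr rfl fun u _ => ?_
      rw [pow_succ]
      ring
    have hR : (d.factorial : ℝ) * (∑ u ∈ range (i + 1 + 1), ρ ^ u / ((d + 1 + u).factorial : ℝ))
          * ((d : ℝ) + 1)
        = 1 + ∑ u ∈ range (i + 1),
            (((d+1).factorial : ℕ) : ℝ) * ρ ^ (u+1) / (((d + 1 + 1 + u).factorial : ℕ) : ℝ) := by
      rw [sum_range_succ' (fun u => ρ ^ u / ((d + 1 + u).factorial : ℝ)) (i + 1)]
      rw [mul_add ((d.factorial : ℕ) : ℝ), add_mul]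
      have h0 : (d.factorial : ℝ) * (ρ ^ 0 / ((d + 1 + 0).factorial : ℝ)) * ((d : ℝ) + 1) = 1 := by
        rw [show d + 1 + 0 = d + 1 by ring, Nat.factorial_succ]
        have h1 : (d.factorial : ℝ) ≠ 0 := by positivity
        push_cast
        field_simp
      rw [h0, mul_sum, sum_mul]
      rw [add_comm]
      congr 1
      refine sum_congr rfl fun u _ => ?_
      have harg : d + 1 + (u + 1) = d + 1 + 1 + u := by ring
      rw [harg, Nat.factorial_succ d]
      push_cast
      ring
    rw [hL, hR]

lemma eseq_closed (K : ℕ) (ρ μt : ℝ) :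
    ∀ i d : ℕ, d + 1 + i = K →
      eseq K ρ μt i = (μt / K) * ∑ u ∈ range (i + 1),
        ((i : ℝ) - (u : ℝ)) * ρ ^ u * (((d+1).factorial : ℕ) : ℝ)
          / (((d + 1 + u).factorial : ℕ) : ℝ) := by
  intro i
  induction i with
  | zero =>
    intro d hd
    simp [eseq]
  | succ i ih =>
    intro d hd
    have hd' : (d + 1) + 1 + i = K := by omega
    have hE := ih (d + 1) hd'
    have hK0 : ((K : ℕ) : ℝ) ≠ 0 := by
      have : 0 < K := by omega
      positivity
    show ((i : ℝ) + 1) * μt / K + ρ * eseq K ρ μt i / ((K : ℝ) - (i : ℝ)) = _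
    rw [hE]
    have hKi : (K : ℝ) - (i : ℝ) = (d : ℝ) + 2 := by
      have hK2 : K = d + 2 + i := by omega
      subst hK2; push_cast; ring
    rw [hKi]
    have hfac : ∀ u : ℕ, (((d + 1 + 1 + u).factorial : ℕ) : ℝ) ≠ 0 := fun u => by positivity
    have hd2 : ((d : ℝ) + 2) ≠ 0 := by positivity
    have hL : ρ * ((μt / K) * ∑ u ∈ range (i + 1),
          ((i : ℝ) - (u : ℝ)) * ρ ^ u * (((d+1+1).factorial : ℕ) : ℝ)
            / (((d + 1 + 1 + u).factorial : ℕ) : ℝ)) / ((d : ℝ) + 2)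
        = ∑ u ∈ range (i + 1), μt / (K : ℝ) * (((i : ℝ) - (u : ℝ)) * ρ ^ (u+1)
            * (((d+1).factorial : ℕ) : ℝ) / (((d + 1 + 1 + u).factorial : ℕ) : ℝ)) := by
      rw [mul_sum, mul_sum, sum_div]
      refine sum_congr rfl fun u _ => ?_
      rw [Nat.factorial_succ (d+1), pow_succ]
      push_cast
      field_simp
      ring
    rw [hL, mul_sum]
    rw [sum_range_succ' (fun u => μt / (K : ℝ) * (((((i+1 : ℕ)) : ℝ) - (u : ℝ)) * ρ ^ u
        * (((d+1).factorial : ℕ) : ℝ) / (((d + 1 + u).factorial : ℕ) : ℝ))) (i + 1)]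
    have hfd1 : (((d+1).factorial : ℕ) : ℝ) ≠ 0 := by positivity
    have h0 : μt / (K : ℝ) * (((((i+1 : ℕ)) : ℝ) - ((0:ℕ) : ℝ)) * ρ ^ 0
        * (((d+1).factorial : ℕ) : ℝ) / (((d + 1 + 0).factorial : ℕ) : ℝ))
        = ((i : ℝ) + 1) * μt / K := by
      rw [show d + 1 + 0 = d + 1 from rfl]
      push_cast
      field_simp
      ring
    rw [h0, add_comm]
    congr 1
    refine sum_congr rfl fun u _ => ?_
    have harg : d + 1 + (u + 1) = d + 1 + 1 + u := by ring
    rw [harg]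
    push_cast
    ring

lemma Aseq_S (K : ℕ) (hK : 1 ≤ K) (ρ : ℝ) :
    1 + ρ * Aseq K ρ (K - 1) = ∑ j ∈ range (K + 1), ρ ^ j / (Nat.factorial j : ℝ) := by
  have h := Aseq_closed K ρ (K - 1) 0 (by omega)
  rw [h]
  have hrw : K - 1 + 1 = K := by omega
  rw [hrw]
  rw [sum_range_succ' (fun j => ρ ^ j / (Nat.factorial j : ℝ)) K]
  simp only [Nat.factorial_zero, pow_zero, Nat.cast_one]
  rw [one_mul, mul_sum]
  rw [add_comm (∑ _u ∈ _, _) _]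
  norm_num
  refine sum_congr rfl fun u _ => ?_
  rw [show 0 + 1 + u = u + 1 by ring, pow_succ]
  ring

lemma eseq_eta (K : ℕ) (hK : 1 ≤ K) (ρ μt : ℝ) :
    μt + ρ * eseq K ρ μt (K - 1)
      = μt * ∑ j ∈ range K, (ρ ^ j / (Nat.factorial j : ℝ)) * (((K : ℝ) - j) / K) := by
  obtain ⟨N, rfl⟩ : ∃ N, K = N + 1 := ⟨K - 1, by omega⟩
  have hN0 : (((N+1 : ℕ)) : ℝ) ≠ 0 := by positivity
  have h := eseq_closed (N+1) ρ μt N 0 (by omega)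
  simp only [Nat.add_sub_cancel]
  rw [h]
  rw [sum_range_succ (fun u => ((N : ℝ) - (u : ℝ)) * ρ ^ u * (((0+1 : ℕ)).factorial : ℝ)
      / (((0 + 1 + u : ℕ)).factorial : ℝ)) N]
  rw [sum_range_succ' (fun j => ρ ^ j / (Nat.factorial j : ℝ)
      * (((((N+1 : ℕ)) : ℝ) - (j : ℝ)) / (((N+1 : ℕ)) : ℝ))) N]
  have hzero : ((N : ℝ) - (N : ℝ)) * ρ ^ N * (((0+1 : ℕ)).factorial : ℝ)
      / (((0 + 1 + N : ℕ)).factorial : ℝ) = 0 := by ring_nf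
  rw [hzero, add_zero]
  have hf0 : ρ ^ 0 / ((Nat.factorial 0 : ℕ) : ℝ)
      * (((((N+1 : ℕ)) : ℝ) - ((0:ℕ) : ℝ)) / (((N+1 : ℕ)) : ℝ)) = 1 := by
    simp only [pow_zero, Nat.factorial_zero, Nat.cast_one, Nat.cast_zero, sub_zero]
    field_simp
  rw [hf0, mul_add, mul_one, mul_sum, mul_sum, mul_sum]
  rw [add_comm (∑ _u ∈ _, _) μt]
  congr 1
  refine sum_congr rfl fun u hu => ?_
  have harg : 0 + 1 + u = u + 1 := by omega
  rw [harg]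
  have hfu : ((Nat.factorial (u+1) : ℕ) : ℝ) ≠ 0 := by positivity
  push_cast
  rw [pow_succ]
  field_simp
  ring

lemma lin_lim (c d : ℝ) : Tendsto (fun x : ℝ => (c * x + d) / x) atTop (nhds c) := by
  have h1 : Tendsto (fun x : ℝ => c + d / x) atTop (nhds (c + 0)) :=
    tendsto_const_nhds.add (tendsto_const_nhds.div_atTop tendsto_id)
  rw [add_zero] at h1
  refine h1.congr' ?_
  filter_upwards [eventually_ne_atTop (0:ℝ)] with x hx
  rw [add_div, mul_div_cancel_right₀ _ hx]

lemma tendsto_ratio {f g : ℝ → ℝ} {a b : ℝ} (hb : b ≠ 0)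
    (hf : Tendsto (fun x => f x / x) atTop (nhds a))
    (hg : Tendsto (fun x => g x / x) atTop (nhds b)) :
    Tendsto (fun x => f x / g x) atTop (nhds (a / b)) := by
  refine (hf.div hg hb).congr' ?_
  filter_upwards [eventually_ne_atTop (0:ℝ)] with x hx
  rcases eq_or_ne (g x) 0 with h|h
  · simp [h]
  · simp only [Pi.div_apply]
    field_simp

lemma atTop_lin {c : ℝ} (hc : 0 < c) (d : ℝ) :
    Tendsto (fun x : ℝ => c * x + d) atTop atTop :=
  tendsto_atTop_add_const_right atTop d (tendsto_id.const_mul_atTop hc)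

lemma ev_pos {g : ℝ → ℝ} {b : ℝ} (hb : 0 < b)
    (hg : Tendsto (fun x => g x / x) atTop (nhds b)) :
    ∀ᶠ x in atTop, 0 < g x := by
  have h1 : ∀ᶠ x in atTop, 0 < g x / x := hg.eventually (eventually_gt_nhds hb)
  filter_upwards [h1, eventually_gt_atTop (0:ℝ)] with x h2 h3
  by_contra hle
  push_neg at hle
  have : g x / x ≤ 0 := div_nonpos_of_nonpos_of_nonneg hle h3.le
  linarith

lemma mul_ratio {f g : ℝ → ℝ} {a b : ℝ} (hb : b ≠ 0)
    (hf : Tendsto f atTop (nhds a))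
    (hg : Tendsto (fun x => g x / x) atTop (nhds b)) :
    Tendsto (fun x => x * f x / g x) atTop (nhds (a / b)) := by
  refine tendsto_ratio hb ?_ hg
  refine hf.congr' ?_
  filter_upwards [eventually_ne_atTop (0:ℝ)] with x hx
  rw [mul_comm, mul_div_assoc, div_self hx, mul_one]

set_option maxHeartbeats 2000000 in
/-- In the SFJ limit `μᵢ → ∞` (with `ρ` fixed), the second moment of the CD
effective server time, `M₂ = E[(Υ̌₀)²]`, converges to `2·ǎ₀²/(η²·μ_t²)`. -/
theorem cd_est_second_moment_limit
    (K : ℕ) (hK : 2 ≤ K) (ρ μt : ℝ) (hρ : 0 < ρ) (hmut : 0 < μt)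
    (m n E δ σ r : ℝ → ℕ → ℝ)
    (hmK : ∀ μi : ℝ, 0 < μi → m μi K = 1 / gammaCD K μt μi K)
    (hmK1 : ∀ μi : ℝ, 0 < μi →
      m μi (K - 1) = (1 + m μi K * (ρ * μi)) / gammaCD K μt μi (K - 1))
    (hnK1 : ∀ μi : ℝ, 0 < μi →
      n μi (K - 1) = ((K : ℝ) - 1) * μi / gammaCD K μt μi (K - 1))
    (hrec : ∀ μi : ℝ, 0 < μi → ∀ i, 2 ≤ i → i ≤ K - 1 →
      m μi (K - i) = (1 + m μi (K - i + 1) * (ρ * μi))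
          / (alphaCD K ρ μt μi (K - i) - n μi (K - i + 1) * (ρ * μi))
      ∧ n μi (K - i) = ((K : ℝ) - (i : ℝ)) * μi
          / (alphaCD K ρ μt μi (K - i) - n μi (K - i + 1) * (ρ * μi)))
    (hE0 : ∀ μi : ℝ, 0 < μi →
      E μi 0 = (1 + m μi 1 * (ρ * μi)) / (ρ * μi + μt - n μi 1 * (ρ * μi)))
    (hEl : ∀ μi : ℝ, 0 < μi → ∀ l, 1 ≤ l → l ≤ K - 1 →
      E μi l = m μi l + n μi l * E μi (l - 1))
    (hEK : ∀ μi : ℝ, 0 < μi → E μi K = m μi K + E μi (K - 1))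
    (hdK : ∀ μi : ℝ, 0 < μi → δ μi K = gammaCD K μt μi K)
    (hsK : ∀ μi : ℝ, 0 < μi →
      σ μi K = (2 * δ μi K / alphaCD K ρ μt μi K) * E μi (K - 1)
        + (2 * (ρ * μi) / alphaCD K ρ μt μi K) * E μi K)
    (hrK : ∀ μi : ℝ, 0 < μi →
      r μi K = 2 / (δ μi K * alphaCD K ρ μt μi K) + σ μi K / δ μi K)
    (hrec2 : ∀ μi : ℝ, 0 < μi → ∀ i, 1 ≤ i → i ≤ K - 1 →
      δ μi (K - i) = (alphaCD K ρ μt μi (K - i) * δ μi (K - i + 1)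
          - (ρ * μi) * (((K : ℝ) - i) + 1) * μi) / δ μi (K - i + 1)
      ∧ σ μi (K - i) = (2 * (ρ * μi) / alphaCD K ρ μt μi (K - i)) * E μi (K - i + 1)
          + (2 * ((K : ℝ) - i) * μi / alphaCD K ρ μt μi (K - i)) * E μi (K - i - 1)
      ∧ r μi (K - i) = (1 / δ μi (K - i))
          * (2 / alphaCD K ρ μt μi (K - i) + (ρ * μi) * r μi (K - i + 1) + σ μi (K - i)))
    (hd0 : ∀ μi : ℝ, 0 < μi →
      δ μi 0 = (alphaCD K ρ μt μi 0 * δ μi 1 - (ρ * μi) * μi) / δ μi 1) :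
    Tendsto (fun μi => (1 / δ μi 0)
        * (2 / alphaCD K ρ μt μi 0 + (ρ * μi) * r μi 1
            + 2 * (ρ * μi) * E μi 1 / alphaCD K ρ μt μi 0))
      atTop
      (nhds (2 * (∑ j ∈ Finset.range (K + 1), ρ ^ j / (Nat.factorial j : ℝ)) ^ 2
        / ((∑ j ∈ Finset.range K, (ρ ^ j / (Nat.factorial j : ℝ)) * (((K : ℝ) - j) / K)) ^ 2
            * μt ^ 2))) := by
  have hKR : (0:ℝ) < (K:ℝ) := by
    have : 0 < K := by omega
    exact_mod_cast this
  have ev0 : ∀ᶠ μi : ℝ in atTop, 0 < μi := eventually_gt_atTop 0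
  set S := ∑ j ∈ Finset.range (K + 1), ρ ^ j / (Nat.factorial j : ℝ) with hSdef
  set η := ∑ j ∈ Finset.range K, (ρ ^ j / (Nat.factorial j : ℝ)) * (((K : ℝ) - j) / K)
    with hηdef
  have hηpos : 0 < η := by
    rw [hηdef]
    refine Finset.sum_pos (fun j hj => ?_) ⟨0, Finset.mem_range.mpr (by omega)⟩
    have hjK : (j:ℝ) < (K:ℝ) := by exact_mod_cast Finset.mem_range.mp hj
    have h1 : (0:ℝ) < ρ ^ j / (Nat.factorial j : ℝ) := by positivity
    have h2 : (0:ℝ) < ((K:ℝ) - j) / K := div_pos (by linarith) hKR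
    exact mul_pos h1 h2
  have hμtη : 0 < μt * η := mul_pos hmut hηpos
  set a := S / (μt * η) with hadef
  clear_value a
  clear_value S η
  have haS : 1 + ρ * Aseq K ρ (K-1) = S := by
    rw [hSdef]; exact Aseq_S K (by omega) ρ
  have haE : μt + ρ * eseq K ρ μt (K-1) = μt * η := by
    rw [hηdef]; exact eseq_eta K (by omega) ρ μt
  have hgK : ∀ x : ℝ, gammaCD K μt x K = (K:ℝ) * x := by
    intro x; unfold gammaCD; rw [sub_self]; ring
  have hmKl : Tendsto (fun x => x * m x K) atTop (nhds (1/(K:ℝ))) := by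
    refine tendsto_const_nhds.congr' ?_
    filter_upwards [ev0] with x hx
    rw [hmK x hx, hgK]
    field_simp
  have hcK1 : ((K - 1 : ℕ) : ℝ) = (K:ℝ) - 1 := by
    push_cast [Nat.cast_sub (show 1 ≤ K by omega)]; ring
  -- ===================== m and n limits =====================
  have hMN : ∀ i, 1 ≤ i → i ≤ K - 1 →
      Tendsto (fun x => x * m x (K - i)) atTop (nhds (Aseq K ρ i)) ∧
      Tendsto (fun x => x * (1 - n x (K - i))) atTop
        (nhds (eseq K ρ μt i / ((K:ℝ) - (i:ℝ)))) := by
    intro i hi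
    induction i, hi using Nat.le_induction with
    | base =>
      intro _
      have hγ : ∀ x:ℝ, gammaCD K μt x (K-1) = ((K:ℝ)-1)*x + μt/(K:ℝ) := by
        intro x; unfold gammaCD; rw [hcK1]
        have : (K:ℝ) - ((K:ℝ) - 1) = 1 := by ring
        rw [this]; ring
      have hγdiv : Tendsto (fun x => gammaCD K μt x (K-1)/x) atTop (nhds ((K:ℝ)-1)) :=
        (lin_lim ((K:ℝ)-1) (μt/(K:ℝ))).congr (fun x => by rw [hγ x])
      have hKm1pos : (0:ℝ) < (K:ℝ) - 1 := by
        have : (2:ℝ) ≤ (K:ℝ) := by exact_mod_cast hK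
        linarith
      have hγpos : ∀ᶠ x in atTop, 0 < gammaCD K μt x (K-1) := ev_pos hKm1pos hγdiv
      constructor
      · have hnum : Tendsto (fun x => 1 + m x K * (ρ * x)) atTop
            (nhds (1 + ρ * Aseq K ρ 0)) := by
          have h2 : Tendsto (fun x => 1 + ρ * (x * m x K)) atTop
              (nhds (1 + ρ * (1/(K:ℝ)))) := tendsto_const_nhds.add (hmKl.const_mul ρ)
          have hA0 : Aseq K ρ 0 = 1/(K:ℝ) := rfl
          rw [hA0]
          exact h2.congr (fun x => by ring)
        have h4 := mul_ratio (ne_of_gt hKm1pos) hnum hγdiv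
        have hval : (1 + ρ * Aseq K ρ 0) / ((K:ℝ)-1) = Aseq K ρ 1 := by
          show _ = (1 + ρ * Aseq K ρ 0) / ((K : ℝ) - (((0:ℕ):ℝ) + 1))
          norm_num
        rw [hval] at h4
        refine h4.congr' ?_
        filter_upwards [ev0] with x hx
        rw [hmK1 x hx, mul_div_assoc]
      · have h4 := mul_ratio (ne_of_gt hKm1pos)
          (tendsto_const_nhds : Tendsto (fun _ : ℝ => μt/(K:ℝ)) atTop _) hγdiv
        have hval : (μt/(K:ℝ))/((K:ℝ)-1) = eseq K ρ μt 1 / ((K:ℝ) - ((1:ℕ):ℝ)) := by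
          have he1 : eseq K ρ μt 1 = μt/(K:ℝ) := by
            simp [eseq]
          rw [he1]
          norm_num
        rw [hval] at h4
        refine h4.congr' ?_
        filter_upwards [ev0, hγpos] with x hx hγx
        rw [hnK1 x hx, hγ x]
        rw [hγ x] at hγx
        field_simp
        ring
    | succ i hi ih =>
      intro hle
      obtain ⟨Mi, Ni⟩ := ih (by omega)
      have hidx : K - (i+1) + 1 = K - i := by omega
      have hcast : ((K - (i+1) : ℕ) : ℝ) = (K:ℝ) - ((i:ℝ)+1) := by
        push_cast [Nat.cast_sub (show i + 1 ≤ K by omega)]; ring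
      have hDeq : ∀ x : ℝ, alphaCD K ρ μt x (K - (i+1)) - n x (K - i) * (ρ * x)
          = ((((K:ℝ)-((i:ℝ)+1)) * x + ((i:ℝ)+1) * μt / (K:ℝ)))
            + ρ * (x * (1 - n x (K - i))) := by
        intro x; unfold alphaCD; rw [hcast]
        have : (K:ℝ) - ((K:ℝ) - ((i:ℝ)+1)) = (i:ℝ)+1 := by ring
        rw [this]; ring
      have hDdiv : Tendsto (fun x => (alphaCD K ρ μt x (K - (i+1))
            - n x (K - i) * (ρ * x)) / x) atTop (nhds ((K:ℝ) - ((i:ℝ)+1))) := by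
        have h1 := lin_lim ((K:ℝ)-((i:ℝ)+1)) (((i:ℝ)+1)*μt/(K:ℝ))
        have h2 : Tendsto (fun x => (ρ * (x * (1 - n x (K-i))))/x) atTop (nhds 0) :=
          (Ni.const_mul ρ).div_atTop tendsto_id
        have h3 := h1.add h2
        rw [add_zero] at h3
        refine h3.congr (fun x => ?_)
        rw [← add_div, ← hDeq x]
      have hjpos : (0:ℝ) < (K:ℝ) - ((i:ℝ)+1) := by
        have : ((i:ℝ) + 1) + 1 ≤ (K:ℝ) := by exact_mod_cast (show i+1+1 ≤ K by omega)
        linarith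
      have hDpos := ev_pos hjpos hDdiv
      constructor
      · have hnum : Tendsto (fun x => 1 + m x (K-i) * (ρ*x)) atTop
            (nhds (1 + ρ * Aseq K ρ i)) := by
          have h2 : Tendsto (fun x => 1 + ρ * (x * m x (K-i))) atTop
              (nhds (1 + ρ * Aseq K ρ i)) := tendsto_const_nhds.add (Mi.const_mul ρ)
          exact h2.congr (fun x => by ring)
        have h4 := mul_ratio (ne_of_gt hjpos) hnum hDdiv
        have hval : (1 + ρ * Aseq K ρ i) / ((K:ℝ)-((i:ℝ)+1)) = Aseq K ρ (i+1) := rfl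
        rw [hval] at h4
        refine h4.congr' ?_
        filter_upwards [ev0] with x hx
        have hm' := (hrec x hx (i+1) (by omega) hle).1
        rw [hidx] at hm'
        rw [hm', mul_div_assoc]
      · have hnum : Tendsto (fun x => ((i:ℝ)+1)*μt/(K:ℝ) + ρ * (x * (1 - n x (K - i))))
            atTop (nhds (((i:ℝ)+1)*μt/(K:ℝ) + ρ * (eseq K ρ μt i / ((K:ℝ) - (i:ℝ))))) :=
          tendsto_const_nhds.add (Ni.const_mul ρ)
        have h4 := mul_ratio (ne_of_gt hjpos) hnum hDdiv
        have hval : (((i:ℝ)+1)*μt/(K:ℝ) + ρ * (eseq K ρ μt i / ((K:ℝ) - (i:ℝ))))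
              / ((K:ℝ)-((i:ℝ)+1))
            = eseq K ρ μt (i+1) / ((K:ℝ) - (((i+1):ℕ):ℝ)) := by
          have he : eseq K ρ μt (i+1)
              = ((i:ℝ)+1)*μt/(K:ℝ) + ρ * eseq K ρ μt i / ((K:ℝ) - (i:ℝ)) := rfl
          rw [he]
          push_cast
          ring
        rw [hval] at h4
        refine h4.congr' ?_
        filter_upwards [ev0, hDpos] with x hx hDx
        have hn' := (hrec x hx (i+1) (by omega) hle).2
        rw [hidx] at hn'
        rw [hn']
        have hf : ((i:ℝ)+1)*μt/(K:ℝ) + ρ * (x * (1 - n x (K - i)))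
            = (alphaCD K ρ μt x (K - (i+1)) - n x (K - i) * (ρ * x))
              - ((K:ℝ)-((i:ℝ)+1)) * x := by
          rw [hDeq x]; ring
        rw [hf]
        push_cast
        rw [mul_div_assoc, sub_div, div_self hDx.ne']
  -- ===================== E limits =====================
  have hm0 : ∀ l, 1 ≤ l → l ≤ K - 1 → Tendsto (fun x => m x l) atTop (nhds 0) := by
    intro l h1 h2
    obtain ⟨Ml, -⟩ := hMN (K - l) (by omega) (by omega)
    rw [show K - (K - l) = l by omega] at Ml
    refine (Ml.div_atTop tendsto_id).congr' ?_
    filter_upwards [ev0] with x hx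
    try simp only [id_eq]
    rw [mul_comm, mul_div_assoc, div_self hx.ne', mul_one]
  have hn1 : ∀ l, 1 ≤ l → l ≤ K - 1 → Tendsto (fun x => n x l) atTop (nhds 1) := by
    intro l h1 h2
    obtain ⟨-, Nl⟩ := hMN (K - l) (by omega) (by omega)
    rw [show K - (K - l) = l by omega] at Nl
    have h3 : Tendsto (fun x => 1 - (x * (1 - n x l))/x) atTop (nhds (1 - 0)) :=
      tendsto_const_nhds.sub (Nl.div_atTop tendsto_id)
    rw [sub_zero] at h3
    refine h3.congr' ?_
    filter_upwards [ev0] with x hx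
    try simp only [id_eq]
    rw [mul_comm, mul_div_assoc, div_self hx.ne', mul_one]
    ring
  have hE0l : Tendsto (fun x => E x 0) atTop (nhds a) := by
    obtain ⟨M1, N1⟩ := hMN (K - 1) (by omega) (le_refl _)
    rw [show K - (K - 1) = 1 by omega] at M1 N1
    rw [show (K:ℝ) - ((K-1:ℕ):ℝ) = 1 by rw [hcK1]; ring, div_one] at N1
    have hnum : Tendsto (fun x => 1 + m x 1 * (ρ * x)) atTop (nhds S) := by
      have h2 : Tendsto (fun x => 1 + ρ * (x * m x 1)) atTop
          (nhds (1 + ρ * Aseq K ρ (K-1))) := tendsto_const_nhds.add (M1.const_mul ρ)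
      rw [haS] at h2
      exact h2.congr (fun x => by ring)
    have hden : Tendsto (fun x => ρ * x + μt - n x 1 * (ρ * x)) atTop (nhds (μt * η)) := by
      have h2 : Tendsto (fun x => μt + ρ * (x * (1 - n x 1))) atTop
          (nhds (μt + ρ * eseq K ρ μt (K-1))) := tendsto_const_nhds.add (N1.const_mul ρ)
      rw [haE] at h2
      exact h2.congr (fun x => by ring)
    have h4 := hnum.div hden (ne_of_gt hμtη)
    rw [hadef]
    refine h4.congr' ?_
    filter_upwards [ev0] with x hx
    exact (hE0 x hx).symm
  have hEb : ∀ l, l ≤ K - 1 → Tendsto (fun x => E x l) atTop (nhds a) := by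
    intro l
    induction l with
    | zero => intro _; exact hE0l
    | succ l ihl =>
      intro hle
      have hEl' := ihl (by omega)
      have hm := hm0 (l+1) (by omega) hle
      have hn := hn1 (l+1) (by omega) hle
      have h5 : Tendsto (fun x => m x (l+1) + n x (l+1) * E x l) atTop
          (nhds (0 + 1 * a)) := hm.add (hn.mul hEl')
      rw [zero_add, one_mul] at h5
      refine h5.congr' ?_
      filter_upwards [ev0] with x hx
      have h6 := hEl x hx (l+1) (by omega) hle
      simp only [Nat.add_sub_cancel] at h6
      exact h6.symm
  have hEall : ∀ l, l ≤ K → Tendsto (fun x => E x l) atTop (nhds a) := by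
    intro l hl
    rcases lt_or_eq_of_le hl with hlt | heq
    · exact hEb l (by omega)
    · rw [heq]
      have hmKt : Tendsto (fun x => m x K) atTop (nhds 0) := by
        refine (hmKl.div_atTop tendsto_id).congr' ?_
        filter_upwards [ev0] with x hx
        try simp only [id_eq]
        rw [mul_comm, mul_div_assoc, div_self hx.ne', mul_one]
      have h5 : Tendsto (fun x => m x K + E x (K-1)) atTop (nhds (0 + a)) :=
        hmKt.add (hEb (K-1) (le_refl _))
      rw [zero_add] at h5
      refine h5.congr' ?_
      filter_upwards [ev0] with x hx
      exact (hEK x hx).symm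
  -- ===================== δ limits =====================
  have hδ : ∀ i, i ≤ K - 1 →
      Tendsto (fun x => δ x (K - i) - ((K:ℝ) - (i:ℝ)) * x) atTop
        (nhds (eseq K ρ μt i)) := by
    intro i
    induction i with
    | zero =>
      intro _
      rw [show eseq K ρ μt 0 = (0:ℝ) from rfl]
      simp only [Nat.sub_zero, Nat.cast_zero, sub_zero]
      refine tendsto_const_nhds.congr' ?_
      filter_upwards [ev0] with x hx
      rw [hdK x hx, hgK x]
      ring
    | succ i ihi =>
      intro hle
      have Di := ihi (by omega)
      have hδdiv : Tendsto (fun x => δ x (K-i)/x) atTop (nhds ((K:ℝ)-(i:ℝ))) := by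
        have h2 : Tendsto (fun x => (δ x (K-i) - ((K:ℝ)-(i:ℝ))*x)/x) atTop (nhds 0) :=
          Di.div_atTop tendsto_id
        have h3 : Tendsto (fun x => (δ x (K-i) - ((K:ℝ)-(i:ℝ))*x)/x + ((K:ℝ)-(i:ℝ)))
            atTop (nhds (0 + ((K:ℝ)-(i:ℝ)))) := h2.add tendsto_const_nhds
        rw [zero_add] at h3
        refine h3.congr' ?_
        filter_upwards [ev0] with x hx
        field_simp
        ring
      have hKipos : (0:ℝ) < (K:ℝ) - (i:ℝ) := by
        have : (i:ℝ) + 1 ≤ (K:ℝ) := by exact_mod_cast (show i+1 ≤ K by omega)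
        linarith
      have hδpos := ev_pos hKipos hδdiv
      have hidx : K - (i+1) + 1 = K - i := by omega
      have hcast : ((K - (i+1) : ℕ) : ℝ) = (K:ℝ) - ((i:ℝ)+1) := by
        push_cast [Nat.cast_sub (show i + 1 ≤ K by omega)]; ring
      have hlim : Tendsto (fun x => ((i:ℝ)+1)*μt/(K:ℝ)
            + ρ * ((δ x (K-i) - ((K:ℝ)-(i:ℝ))*x) / (δ x (K-i)/x))) atTop
          (nhds (((i:ℝ)+1)*μt/(K:ℝ) + ρ * (eseq K ρ μt i/((K:ℝ)-(i:ℝ))))) :=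
        tendsto_const_nhds.add ((Di.div hδdiv hKipos.ne').const_mul ρ)
      have hval : ((i:ℝ)+1)*μt/(K:ℝ) + ρ * (eseq K ρ μt i/((K:ℝ)-(i:ℝ)))
          = eseq K ρ μt (i+1) := by
        rw [show eseq K ρ μt (i+1)
          = ((i:ℝ)+1)*μt/(K:ℝ) + ρ * eseq K ρ μt i/((K:ℝ)-(i:ℝ)) from rfl]
        ring
      rw [hval] at hlim
      refine hlim.congr' ?_
      filter_upwards [ev0, hδpos] with x hx hδx
      have hd := (hrec2 x hx (i+1) (by omega) hle).1
      rw [hidx] at hd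
      rw [hd]
      unfold alphaCD
      rw [hcast]
      push_cast
      have h7 : (K:ℝ) - ((K:ℝ) - ((i:ℝ)+1)) = (i:ℝ)+1 := by ring
      rw [h7]
      field_simp
      ring
  have hδdivq : ∀ i, i ≤ K - 1 →
      Tendsto (fun x => δ x (K-i)/x) atTop (nhds ((K:ℝ)-(i:ℝ))) := by
    intro i hile
    have Di := hδ i hile
    have h2 : Tendsto (fun x => (δ x (K-i) - ((K:ℝ)-(i:ℝ))*x)/x) atTop (nhds 0) :=
      Di.div_atTop tendsto_id
    have h3 : Tendsto (fun x => (δ x (K-i) - ((K:ℝ)-(i:ℝ))*x)/x + ((K:ℝ)-(i:ℝ)))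
        atTop (nhds (0 + ((K:ℝ)-(i:ℝ)))) := h2.add tendsto_const_nhds
    rw [zero_add] at h3
    refine h3.congr' ?_
    filter_upwards [ev0] with x hx
    field_simp
    ring
  -- ===================== σ_K and r_K =====================
  have hαK : ∀ x : ℝ, alphaCD K ρ μt x K = (ρ + (K:ℝ)) * x := by
    intro x; unfold alphaCD; rw [sub_self]; ring
  have hρK : (0:ℝ) < ρ + (K:ℝ) := by linarith
  have hσK : Tendsto (fun x => σ x K) atTop (nhds (2*a)) := by
    have h1 : Tendsto (fun x => (2*(K:ℝ)/(ρ+(K:ℝ))) * E x (K-1)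
          + (2*ρ/(ρ+(K:ℝ))) * E x K) atTop
        (nhds ((2*(K:ℝ)/(ρ+(K:ℝ))) * a + (2*ρ/(ρ+(K:ℝ))) * a)) :=
      ((hEall (K-1) (by omega)).const_mul _).add ((hEall K (le_refl _)).const_mul _)
    have hval : (2*(K:ℝ)/(ρ+(K:ℝ))) * a + (2*ρ/(ρ+(K:ℝ))) * a = 2*a := by
      field_simp
      ring
    rw [hval] at h1
    refine h1.congr' ?_
    filter_upwards [ev0] with x hx
    rw [hsK x hx, hdK x hx, hgK x, hαK x]
    have hxne := hx.ne'
    have hρKne := hρK.ne'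
    field_simp
  have hrKl : Tendsto (fun x => x * r x K) atTop (nhds (2*a*Aseq K ρ 0)) := by
    have hαtop : Tendsto (fun x => (K:ℝ) * alphaCD K ρ μt x K) atTop atTop := by
      have := atTop_lin (mul_pos hKR hρK) 0
      refine this.congr (fun x => ?_)
      rw [hαK x]; ring
    have h1 : Tendsto (fun x => 2 / ((K:ℝ) * alphaCD K ρ μt x K) + σ x K / (K:ℝ))
        atTop (nhds (0 + 2*a/(K:ℝ))) :=
      (tendsto_const_nhds.div_atTop hαtop).add (hσK.div_const _)
    rw [zero_add] at h1
    have hval : 2*a/(K:ℝ) = 2*a*Aseq K ρ 0 := by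
      rw [show Aseq K ρ 0 = 1/(K:ℝ) from rfl]
      ring
    rw [hval] at h1
    refine h1.congr' ?_
    filter_upwards [ev0] with x hx
    rw [hrK x hx, hdK x hx, hgK x, hαK x]
    have hα0 : (ρ + (K:ℝ)) * x > 0 := mul_pos hρK hx
    field_simp
  -- ===================== r limits =====================
  have hrall : ∀ i, i ≤ K - 1 →
      Tendsto (fun x => x * r x (K - i)) atTop (nhds (2*a*Aseq K ρ i)) := by
    intro i
    induction i with
    | zero =>
      intro _
      simpa using hrKl
    | succ i ihi =>
      intro hle
      have Ri := ihi (by omega)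
      have hidx : K - (i+1) + 1 = K - i := by omega
      have hcast : ((K - (i+1) : ℕ) : ℝ) = (K:ℝ) - ((i:ℝ)+1) := by
        push_cast [Nat.cast_sub (show i + 1 ≤ K by omega)]; ring
      have hjpos : (0:ℝ) < (K:ℝ) - ((i:ℝ)+1) := by
        have : ((i:ℝ) + 1) + 1 ≤ (K:ℝ) := by exact_mod_cast (show i+1+1 ≤ K by omega)
        linarith
      have hρj : (0:ℝ) < ρ + ((K:ℝ) - ((i:ℝ)+1)) := by linarith
      have hαeq : ∀ x : ℝ, alphaCD K ρ μt x (K-(i+1))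
          = (ρ + ((K:ℝ) - ((i:ℝ)+1))) * x + ((i:ℝ)+1)*μt/(K:ℝ) := by
        intro x; unfold alphaCD; rw [hcast]
        have : (K:ℝ) - ((K:ℝ) - ((i:ℝ)+1)) = (i:ℝ)+1 := by ring
        rw [this]; ring
      have hαdiv : Tendsto (fun x => alphaCD K ρ μt x (K-(i+1))/x) atTop
          (nhds (ρ + ((K:ℝ) - ((i:ℝ)+1)))) :=
        (lin_lim _ _).congr (fun x => by rw [hαeq x])
      have hαtop : Tendsto (fun x => alphaCD K ρ μt x (K-(i+1))) atTop atTop :=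
        (atTop_lin hρj _).congr (fun x => (hαeq x).symm)
      have hδdiv1 : Tendsto (fun x => δ x (K-(i+1))/x) atTop
          (nhds ((K:ℝ)-((i:ℝ)+1))) := by
        have := hδdivq (i+1) hle
        push_cast at this
        exact this
      have hδpos1 := ev_pos hjpos hδdiv1
      -- σ at K-(i+1)
      have hσj : Tendsto (fun x => σ x (K-(i+1))) atTop (nhds (2*a)) := by
        have hT1 : Tendsto (fun x => (2*(ρ*x)*E x (K-i)) / alphaCD K ρ μt x (K-(i+1)))
            atTop (nhds ((2*ρ*a) / (ρ + ((K:ℝ) - ((i:ℝ)+1))))) := by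
          refine tendsto_ratio hρj.ne' ?_ hαdiv
          have h2 : Tendsto (fun x => 2*ρ*E x (K-i)) atTop (nhds (2*ρ*a)) :=
            (hEall (K-i) (by omega)).const_mul _
          refine h2.congr' ?_
          filter_upwards [ev0] with x hx
          field_simp
        have hT2 : Tendsto (fun x => (2*((K:ℝ)-((i:ℝ)+1))*x*E x (K-(i+1)-1))
              / alphaCD K ρ μt x (K-(i+1))) atTop
            (nhds ((2*((K:ℝ)-((i:ℝ)+1))*a) / (ρ + ((K:ℝ) - ((i:ℝ)+1))))) := by
          refine tendsto_ratio hρj.ne' ?_ hαdiv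
          have h2 : Tendsto (fun x => 2*((K:ℝ)-((i:ℝ)+1))*E x (K-(i+1)-1)) atTop
              (nhds (2*((K:ℝ)-((i:ℝ)+1))*a)) :=
            (hEall (K-(i+1)-1) (by omega)).const_mul _
          refine h2.congr' ?_
          filter_upwards [ev0] with x hx
          field_simp
        have h3 := hT1.add hT2
        have hval : (2*ρ*a) / (ρ + ((K:ℝ) - ((i:ℝ)+1)))
            + (2*((K:ℝ)-((i:ℝ)+1))*a) / (ρ + ((K:ℝ) - ((i:ℝ)+1))) = 2*a := by
          field_simp
        rw [hval] at h3
        refine h3.congr' ?_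
        filter_upwards [ev0] with x hx
        have hσ' := (hrec2 x hx (i+1) (by omega) hle).2.1
        rw [hidx] at hσ'
        rw [hσ']
        push_cast
        ring
      -- r at K-(i+1)
      have hnum : Tendsto (fun x => 2 / alphaCD K ρ μt x (K-(i+1))
            + ρ * (x * r x (K-i)) + σ x (K-(i+1))) atTop
          (nhds (0 + ρ * (2*a*Aseq K ρ i) + 2*a)) :=
        ((tendsto_const_nhds.div_atTop hαtop).add (Ri.const_mul ρ)).add hσj
      have h4 := hnum.div hδdiv1 hjpos.ne'
      have hval : (0 + ρ * (2*a*Aseq K ρ i) + 2*a) / ((K:ℝ)-((i:ℝ)+1))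
          = 2*a*Aseq K ρ (i+1) := by
        rw [show Aseq K ρ (i+1) = (1 + ρ * Aseq K ρ i) / ((K:ℝ) - ((i:ℝ)+1)) from rfl]
        field_simp
        ring
      rw [hval] at h4
      refine h4.congr' ?_
      filter_upwards [ev0, hδpos1] with x hx hδx
      have hr' := (hrec2 x hx (i+1) (by omega) hle).2.2
      rw [hidx] at hr'
      rw [hr']
      simp only [Pi.div_apply]
      field_simp
  -- ===================== final assembly =====================
  have hα0 : ∀ x : ℝ, alphaCD K ρ μt x 0 = ρ * x + μt := by
    intro x; unfold alphaCD
    rw [Nat.cast_zero, sub_zero, zero_mul, add_zero]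
    field_simp
  have hα0top : Tendsto (fun x => alphaCD K ρ μt x 0) atTop atTop :=
    (atTop_lin hρ μt).congr (fun x => (hα0 x).symm)
  have hδ1 : Tendsto (fun x => δ x 1 - x) atTop (nhds (eseq K ρ μt (K-1))) := by
    have := hδ (K-1) (le_refl _)
    rw [show K - (K-1) = 1 by omega, show (K:ℝ) - ((K-1:ℕ):ℝ) = 1 by rw [hcK1]; ring] at this
    refine this.congr (fun x => by ring)
  have hδ1div : Tendsto (fun x => δ x 1 / x) atTop (nhds 1) := by
    have := hδdivq (K-1) (le_refl _)
    rw [show K - (K-1) = 1 by omega, show (K:ℝ) - ((K-1:ℕ):ℝ) = 1 by rw [hcK1]; ring] at this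
    exact this
  have hδ1pos : ∀ᶠ x in atTop, 0 < δ x 1 := ev_pos one_pos hδ1div
  have hδ0 : Tendsto (fun x => δ x 0) atTop (nhds (μt * η)) := by
    have h1 : Tendsto (fun x => μt + ρ * ((δ x 1 - x) / (δ x 1 / x))) atTop
        (nhds (μt + ρ * (eseq K ρ μt (K-1) / 1))) :=
      tendsto_const_nhds.add ((hδ1.div hδ1div one_ne_zero).const_mul ρ)
    rw [div_one, haE] at h1
    refine h1.congr' ?_
    filter_upwards [ev0, hδ1pos] with x hx hδx
    rw [hd0 x hx, hα0 x]
    field_simp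
    ring
  have hr1 : Tendsto (fun x => x * r x 1) atTop (nhds (2*a*Aseq K ρ (K-1))) := by
    have := hrall (K-1) (le_refl _)
    rw [show K - (K-1) = 1 by omega] at this
    exact this
  have hT1 : Tendsto (fun x : ℝ => 2 / alphaCD K ρ μt x 0) atTop (nhds 0) :=
    tendsto_const_nhds.div_atTop hα0top
  have hT2 : Tendsto (fun x : ℝ => (ρ * x) * r x 1) atTop
      (nhds (ρ * (2*a*Aseq K ρ (K-1)))) :=
    (hr1.const_mul ρ).congr (fun x => by ring)
  have hT3 : Tendsto (fun x : ℝ => 2 * (ρ * x) * E x 1 / alphaCD K ρ μt x 0) atTop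
      (nhds ((2*ρ*a)/ρ)) := by
    refine tendsto_ratio hρ.ne' ?_ ?_
    · have h2 : Tendsto (fun x => 2*ρ*E x 1) atTop (nhds (2*ρ*a)) :=
        (hEall 1 (by omega)).const_mul _
      refine h2.congr' ?_
      filter_upwards [ev0] with x hx
      field_simp
    · exact (lin_lim ρ μt).congr (fun x => by rw [hα0 x])
  have hinv : Tendsto (fun x : ℝ => 1 / δ x 0) atTop (nhds (1 / (μt * η))) :=
    tendsto_const_nhds.div hδ0 hμtη.ne'
  have hfinal := hinv.mul ((hT1.add hT2).add hT3)
  have hAval : Aseq K ρ (K-1) = (S - 1)/ρ := by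
    rw [eq_div_iff hρ.ne']
    linarith [haS]
  have hval : (1 / (μt * η)) * (0 + ρ * (2*a*Aseq K ρ (K-1)) + (2*ρ*a)/ρ)
      = 2 * S^2 / (η^2 * μt^2) := by
    rw [hAval, hadef]
    field_simp
    ring
  rw [hval] at hfinal
  exact hfinal
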